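/- Let n and k be positive integers with n ≥ 2k and gcd(n, k) = 2. If n ≡ 0 (mod 6), then the generalized Petersen graph GP(n, k) admits a 5-star edge coloring, i.e., χ'_s(GP(n, k)) ≤ 5. -/

import Mathlib

/-- The generalized Petersen graph `GP(n, k)`: vertices are `Sum.inl i = u_i` (outer) and
`Sum.inr i = v_i` (inner) for `i : ZMod n`, with edges `u_i u_{i+1}`, `v_i v_{i+k}` and the
spokes `u_i v_i`, indices taken modulo `n`. -/
def genPetersen (n k : ℕ) : SimpleGraph (ZMod n ⊕ ZMod n) :=
  SimpleGraph.fromRel (fun x y =>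
    match x, y with
    | Sum.inl i, Sum.inl j => j = i + 1
    | Sum.inr i, Sum.inr j => j = i + (k : ZMod n)
    | Sum.inl i, Sum.inr j => i = j
    | Sum.inr _, Sum.inl _ => False)

/-- `c` is a star edge coloring of `G`: it is a proper edge coloring (distinct edges of `G`
sharing a vertex receive different colors) and no path with four edges and no cycle with
four edges is bicolored (i.e. colored with exactly two colors). -/
def IsStarEdgeColoring {V α : Type*} [DecidableEq α] (G : SimpleGraph V)
    (c : Sym2 V → α) : Prop :=
  (∀ e₁ ∈ G.edgeSet, ∀ e₂ ∈ G.edgeSet, e₁ ≠ e₂ → (∃ v, v ∈ e₁ ∧ v ∈ e₂) → c e₁ ≠ c e₂) ∧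
  (∀ (u v : V) (p : G.Walk u v), p.IsPath → p.length = 4 →
      (p.edges.map c).toFinset.card ≠ 2) ∧
  (∀ (u : V) (p : G.Walk u u), p.IsCycle → p.length = 4 →
      (p.edges.map c).toFinset.card ≠ 2)

namespace GPaux

abbrev V6 := ZMod 6 ⊕ ZMod 6

def A : ZMod 6 → Fin 5 := ![1,0,3,2,4,0]
def S : ZMod 6 → Fin 5 := ![2,2,2,0,0,2]
def B : ZMod 6 → Fin 5 := ![4,4,1,1,3,3]

def table : V6 → V6 → Fin 5
| .inl i, .inl j => if j = i+1 then A i else if i = j+1 then A j else 0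
| .inr i, .inr j => if j = i+2 then B i else if i = j+2 then B j else 0
| .inl i, .inr _ => S i
| .inr _, .inl j => S j

def c6 : Sym2 V6 → Fin 5 := Sym2.lift ⟨table, by decide⟩

def step : V6 → Fin 3 → V6
| .inl i, 0 => .inl (i+1) | .inl i, 1 => .inl (i-1) | .inl i, _ => .inr i
| .inr i, 0 => .inr (i+2) | .inr i, 1 => .inr (i-2) | .inr i, _ => .inl i

def adj6 : V6 → V6 → Bool
| .inl i, .inl j => j == i+1 || i == j+1
| .inr i, .inr j => j == i+2 || i == j+2
| .inl i, .inr j => i == j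
| .inr i, .inl j => i == j

lemma adj_step : ∀ x y : V6, adj6 x y = true →
    y = step x 0 ∨ y = step x 1 ∨ y = step x 2 := by decide

lemma properCheck : ∀ (x a b : V6), adj6 x a = true → adj6 x b = true → a ≠ b →
    c6 s(x, a) ≠ c6 s(x, b) := by decide

abbrev P (w0 w1 w2 w3 w4 : V6) : Prop := w0 ≠ w2 → w1 ≠ w3 → w2 ≠ w4 →
  ([c6 s(w0,w1), c6 s(w1,w2), c6 s(w2,w3), c6 s(w3,w4)]).toFinset.card ≠ 2

set_option maxHeartbeats 2000000 in
lemma mainCheck : ∀ (w0 : V6) (d1 d2 d3 d4 : Fin 3),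
    P w0 (step w0 d1) (step (step w0 d1) d2) (step (step (step w0 d1) d2) d3)
      (step (step (step (step w0 d1) d2) d3) d4) := by decide

lemma key : ∀ w0 w1 w2 w3 w4 : V6, adj6 w0 w1 = true → adj6 w1 w2 = true →
    adj6 w2 w3 = true → adj6 w3 w4 = true → P w0 w1 w2 w3 w4 := by
  intro w0 w1 w2 w3 w4 h1 h2 h3 h4
  rcases adj_step _ _ h1 with h|h|h <;> subst h <;>
  rcases adj_step _ _ h2 with h|h|h <;> subst h <;>
  rcases adj_step _ _ h3 with h|h|h <;> subst h <;>
  rcases adj_step _ _ h4 with h|h|h <;> subst h <;>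
  exact mainCheck _ _ _ _ _

lemma adjO (a : ZMod 6) : adj6 (.inl a) (.inl (a+1)) = true := by revert a; decide
lemma adjO' (a : ZMod 6) : adj6 (.inl a) (.inl (a-1)) = true := by revert a; decide
lemma adjS (a : ZMod 6) : adj6 (.inl a) (.inr a) = true := by revert a; decide
lemma adjS' (a : ZMod 6) : adj6 (.inr a) (.inl a) = true := by revert a; decide
lemma adjI2 (a : ZMod 6) : adj6 (.inr a) (.inr (a+2)) = true := by revert a; decide
lemma adjI2' (a : ZMod 6) : adj6 (.inr a) (.inr (a-2)) = true := by revert a; decide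
lemma adjI4 (a : ZMod 6) : adj6 (.inr a) (.inr (a+4)) = true := by revert a; decide
lemma adjI4' (a : ZMod 6) : adj6 (.inr a) (.inr (a-4)) = true := by revert a; decide

lemma ne2 (a : ZMod 6) : a + 1 ≠ a - 1 := by revert a; decide
lemma ne2' (a : ZMod 6) : a - 1 ≠ a + 1 := by revert a; decide
lemma ne4 (a : ZMod 6) : a + 2 ≠ a - 2 := by revert a; decide
lemma ne4' (a : ZMod 6) : a - 2 ≠ a + 2 := by revert a; decide
lemma ne8 (a : ZMod 6) : a + 4 ≠ a - 4 := by revert a; decide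
lemma ne8' (a : ZMod 6) : a - 4 ≠ a + 4 := by revert a; decide

lemma adj_cases {n k : ℕ} {x y : ZMod n ⊕ ZMod n} (h : (genPetersen n k).Adj x y) :
    (∃ i, x = .inl i ∧ (y = .inl (i+1) ∨ y = .inl (i-1) ∨ y = .inr i)) ∨
    (∃ i, x = .inr i ∧ (y = .inr (i + (k:ZMod n)) ∨ y = .inr (i - (k:ZMod n)) ∨ y = .inl i)) := by
  rcases x with i | i <;> rcases y with j | j <;>
    simp only [genPetersen, SimpleGraph.fromRel_adj, ne_eq, Sum.inl.injEq, Sum.inr.injEq,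
      or_false, false_or] at h
  · refine Or.inl ⟨i, rfl, ?_⟩
    rcases h.2 with h' | h'
    · exact Or.inl (by rw [h'])
    · exact Or.inr (Or.inl (by rw [h']; congr 1; ring))
  · exact Or.inl ⟨i, rfl, Or.inr (Or.inr (by rw [h.2]))⟩
  · exact Or.inr ⟨i, rfl, Or.inr (Or.inr (by rw [h.2]))⟩
  · refine Or.inr ⟨i, rfl, ?_⟩
    rcases h.2 with h' | h'
    · exact Or.inl (by rw [h'])
    · exact Or.inr (Or.inl (by rw [h']; congr 1; ring))

lemma walk4 {V : Type*} {G : SimpleGraph V} {u v : V} (p : G.Walk u v) (hl : p.length = 4) :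
    ∃ (w1 w2 w3 : V) (h1 : G.Adj u w1) (h2 : G.Adj w1 w2) (h3 : G.Adj w2 w3) (h4 : G.Adj w3 v),
      p = .cons h1 (.cons h2 (.cons h3 (.cons h4 .nil))) := by
  cases p with
  | nil => simp at hl
  | cons h1 q =>
    cases q with
    | nil => simp at hl
    | cons h2 q =>
      cases q with
      | nil => simp at hl
      | cons h3 q =>
        cases q with
        | nil => simp at hl
        | cons h4 q =>
          cases q with
          | nil => exact ⟨_, _, _, h1, h2, h3, h4, rfl⟩
          | cons h5 q => simp [SimpleGraph.Walk.length_cons] at hl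

end GPaux


open GPaux in
theorem stmt_10 (n k : ℕ) (hk : 0 < k) (hn : 2 * k ≤ n) (hd : Nat.gcd n k = 2)
    (h6 : n % 6 = 0) :
    ∃ c : Sym2 (ZMod n ⊕ ZMod n) → Fin 5, IsStarEdgeColoring (genPetersen n k) c := by
  have hdvd : 6 ∣ n := Nat.dvd_of_mod_eq_zero h6
  have h2k : 2 ∣ k := hd ▸ Nat.gcd_dvd_right n k
  have h3k : ¬ 3 ∣ k := by
    intro h
    have h3n : 3 ∣ n := dvd_trans (by norm_num) hdvd
    have h32 : (3:ℕ) ∣ 2 := hd ▸ Nat.dvd_gcd h3n h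
    omega
  have hk6 : k % 6 = 2 ∨ k % 6 = 4 := by omega
  have hkz : (k : ZMod 6) = 2 ∨ (k : ZMod 6) = 4 := by
    rcases hk6 with h | h
    · left; rw [← ZMod.natCast_mod, h]; rfl
    · right; rw [← ZMod.natCast_mod, h]; rfl
  set G := genPetersen n k with hG
  let f : ZMod n →+* ZMod 6 := ZMod.castHom hdvd (ZMod 6)
  let φ : ZMod n ⊕ ZMod n → V6 := Sum.map f f
  -- homomorphism into the Bool adjacency of GP(6,2)
  have hom6 : ∀ {x y : ZMod n ⊕ ZMod n}, G.Adj x y → adj6 (φ x) (φ y) = true := by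
    intro x y h
    rcases adj_cases h with ⟨i, rfl, h'⟩ | ⟨i, rfl, h'⟩
    · rcases h' with rfl | rfl | rfl
      · show adj6 (.inl (f i)) (.inl (f (i+1))) = true
        rw [map_add, map_one]; exact adjO (f i)
      · show adj6 (.inl (f i)) (.inl (f (i-1))) = true
        rw [map_sub, map_one]; exact adjO' (f i)
      · exact adjS (f i)
    · rcases h' with rfl | rfl | rfl
      · show adj6 (.inr (f i)) (.inr (f (i + (k:ZMod n)))) = true
        rw [map_add, map_natCast]
        rcases hkz with hk' | hk' <;> rw [hk']
        · exact adjI2 (f i)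
        · exact adjI4 (f i)
      · show adj6 (.inr (f i)) (.inr (f (i - (k:ZMod n)))) = true
        rw [map_sub, map_natCast]
        rcases hkz with hk' | hk' <;> rw [hk']
        · exact adjI2' (f i)
        · exact adjI4' (f i)
      · exact adjS' (f i)
  -- local injectivity of φ on neighbourhoods
  have hlocinj : ∀ {x a b : ZMod n ⊕ ZMod n}, G.Adj x a → G.Adj x b → a ≠ b → φ a ≠ φ b := by
    intro x a b ha hb hne
    rcases adj_cases ha with ⟨i, rfl, h1⟩ | ⟨i, rfl, h1⟩
    · rcases adj_cases hb with ⟨i', he, h2⟩ | ⟨i', he, h2⟩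
      · injection he with he'; subst he'
        rcases h1 with rfl | rfl | rfl <;> rcases h2 with rfl | rfl | rfl <;>
          first
            | exact absurd rfl hne
            | simp only [φ, Sum.map_inl, Sum.map_inr, ne_eq, Sum.inl.injEq, Sum.inr.injEq,
                map_add, map_sub, map_one] <;>
              first
                | exact ne2 (f i)
                | exact ne2' (f i)
                | simp
      · cases he
    · rcases adj_cases hb with ⟨i', he, h2⟩ | ⟨i', he, h2⟩
      · cases he
      · injection he with he'; subst he'
        rcases h1 with rfl | rfl | rfl <;> rcases h2 with rfl | rfl | rfl <;>
          first
            | exact absurd rfl hne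
            | simp only [φ, Sum.map_inl, Sum.map_inr, ne_eq, Sum.inl.injEq, Sum.inr.injEq,
                map_add, map_sub, map_natCast] <;>
              first
                | (rcases hkz with hk' | hk' <;> rw [hk'] <;>
                    first | exact ne4 (f i) | exact ne4' (f i)
                          | exact ne8 (f i) | exact ne8' (f i))
                | simp
  refine ⟨fun e => c6 (Sym2.map φ e), ?_, ?_, ?_⟩
  · -- proper
    intro e1 he1 e2 he2 hne hv
    obtain ⟨v, hv1, hv2⟩ := hv
    obtain ⟨a, rfl⟩ : ∃ a, e1 = s(v, a) := ⟨Sym2.Mem.other hv1, (Sym2.other_spec hv1).symm⟩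
    obtain ⟨b, rfl⟩ : ∃ b, e2 = s(v, b) := ⟨Sym2.Mem.other hv2, (Sym2.other_spec hv2).symm⟩
    have ha : G.Adj v a := G.mem_edgeSet.mp he1
    have hb : G.Adj v b := G.mem_edgeSet.mp he2
    have hab : a ≠ b := fun h => hne (by rw [h])
    simp only [Sym2.map_pair_eq]
    exact properCheck _ _ _ (hom6 ha) (hom6 hb) (hlocinj ha hb hab)
  · -- paths
    intro u v p hp hl
    obtain ⟨w1, w2, w3, h1, h2, h3, h4, rfl⟩ := walk4 p hl
    have hs := hp.support_nodup
    simp only [SimpleGraph.Walk.support_cons, SimpleGraph.Walk.support_nil,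
      List.nodup_cons, List.mem_cons, List.mem_singleton, List.not_mem_nil, or_false,
      not_or, List.nodup_nil, and_true] at hs
    have h02 : u ≠ w2 := by tauto
    have h13 : w1 ≠ w3 := by tauto
    have h24 : w2 ≠ v := by tauto
    have final := key (φ u) (φ w1) (φ w2) (φ w3) (φ v)
      (hom6 h1) (hom6 h2) (hom6 h3) (hom6 h4)
      (hlocinj h1.symm h2 h02) (hlocinj h2.symm h3 h13) (hlocinj h3.symm h4 h24)
    simpa only [SimpleGraph.Walk.edges_cons, SimpleGraph.Walk.edges_nil,
      List.map_cons, List.map_nil, Sym2.map_pair_eq] using final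
  · -- cycles
    intro u p hc hl
    obtain ⟨w1, w2, w3, h1, h2, h3, h4, rfl⟩ := walk4 p hl
    have hs := hc.support_nodup
    simp only [SimpleGraph.Walk.support_cons, SimpleGraph.Walk.support_nil, List.tail_cons,
      List.nodup_cons, List.mem_cons, List.mem_singleton, List.not_mem_nil, or_false,
      not_or, List.nodup_nil, and_true] at hs
    have h02 : u ≠ w2 := by tauto
    have h13 : w1 ≠ w3 := by tauto
    have h24 : w2 ≠ u := by tauto
    have final := key (φ u) (φ w1) (φ w2) (φ w3) (φ u)
      (hom6 h1) (hom6 h2) (hom6 h3) (hom6 h4)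
      (hlocinj h1.symm h2 h02) (hlocinj h2.symm h3 h13) (hlocinj h3.symm h4 h24)
    simpa only [SimpleGraph.Walk.edges_cons, SimpleGraph.Walk.edges_nil,
      List.map_cons, List.map_nil, Sym2.map_pair_eq] using final
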